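/- arXiv:2004.08167 — 3 statements merged into one kernel-verified Lean document; each statement's English description precedes it below -/
import Mathlib

section
/- Let r, δ, c, ε > 0 with εc < 1, and for λ > 0 let K*(λ) = (√((δε − cλ/(r+δ))² + 4δλ/(r+δ)) − δε − cλ/(r+δ))/(2δ). Then λ ↦ K*(λ) is strictly increasing on (0,∞). -/
/-- The stationary hashrate K*(λ) is strictly increasing in the inverse-friction
parameter λ on (0,∞). -/
theorem stmt_10 (r δ c ε : ℝ) (hr : 0 < r) (hδ : 0 < δ) (hc : 0 < c) (hε : 0 < ε)
    (hεc : ε * c < 1) :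
    StrictMonoOn (fun lam : ℝ =>
        (Real.sqrt ((δ * ε - c * lam / (r + δ)) ^ 2 + 4 * δ * lam / (r + δ))
          - δ * ε - c * lam / (r + δ)) / (2 * δ))
      (Set.Ioi 0) := by
  have hs : 0 < r + δ := by linarith
  apply strictMonoOn_of_deriv_pos (convex_Ioi 0)
  · fun_prop
  · intro x hx
    rw [interior_Ioi, Set.mem_Ioi] at hx
    -- D x and its positivity
    have hDx : 0 < (δ * ε - c * x / (r + δ)) ^ 2 + 4 * δ * x / (r + δ) := by
      have h1 : 0 < 4 * δ * x / (r + δ) := by positivity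
      nlinarith [sq_nonneg (δ * ε - c * x / (r + δ))]
    set q := Real.sqrt ((δ * ε - c * x / (r + δ)) ^ 2 + 4 * δ * x / (r + δ)) with hqdef
    have hq : 0 < q := Real.sqrt_pos.mpr hDx
    have hq2 : q ^ 2 = (δ * ε - c * x / (r + δ)) ^ 2 + 4 * δ * x / (r + δ) :=
      Real.sq_sqrt hDx.le
    -- derivative of the inner linear parts
    have hlin : HasDerivAt (fun y : ℝ => c * y / (r + δ)) (c / (r + δ)) x := by
      simpa using ((hasDerivAt_id x).const_mul c).div_const (r + δ)
    have hg : HasDerivAt (fun y : ℝ => δ * ε - c * y / (r + δ)) (-(c / (r + δ))) x := by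
      exact hlin.const_sub (δ * ε)
    have h2 : HasDerivAt (fun y : ℝ => 4 * δ * y / (r + δ)) (4 * δ / (r + δ)) x := by
      simpa using ((hasDerivAt_id x).const_mul (4 * δ)).div_const (r + δ)
    have hD : HasDerivAt (fun y : ℝ => (δ * ε - c * y / (r + δ)) ^ 2 + 4 * δ * y / (r + δ))
        (2 * (δ * ε - c * x / (r + δ)) * (-(c / (r + δ))) + 4 * δ / (r + δ)) x := by
      refine ((hg.pow 2).add h2).congr_deriv ?_
      norm_num
    set D' := 2 * (δ * ε - c * x / (r + δ)) * (-(c / (r + δ))) + 4 * δ / (r + δ) with hD'def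
    have hsqrt : HasDerivAt
        (fun y : ℝ => Real.sqrt ((δ * ε - c * y / (r + δ)) ^ 2 + 4 * δ * y / (r + δ)))
        (1 / (2 * q) * D') x :=
      (Real.hasDerivAt_sqrt hDx.ne').comp x hD
    have hf : HasDerivAt (fun lam : ℝ =>
        (Real.sqrt ((δ * ε - c * lam / (r + δ)) ^ 2 + 4 * δ * lam / (r + δ))
          - δ * ε - c * lam / (r + δ)) / (2 * δ))
        ((1 / (2 * q) * D' - 0 - c / (r + δ)) / (2 * δ)) x :=
      ((hsqrt.sub (hasDerivAt_const x (δ * ε))).sub hlin).div_const (2 * δ)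
    rw [hf.deriv]
    -- positivity of the derivative
    have hD'pos : 0 < D' := by
      rw [hD'def]
      have h1 : 0 < δ / (r + δ) := by positivity
      have h2 : 0 < c / (r + δ) := by positivity
      have : 2 * (δ * ε - c * x / (r + δ)) * (-(c / (r + δ))) + 4 * δ / (r + δ)
          = 2 * (c / (r + δ)) * (c * x / (r + δ)) + (4 * δ / (r + δ) - 2 * (δ * ε) * (c / (r + δ))) := by
        ring
      rw [this]
      have h3 : 0 < 2 * (c / (r + δ)) * (c * x / (r + δ)) := by positivity
      have h4 : 0 < 4 * δ / (r + δ) - 2 * (δ * ε) * (c / (r + δ)) := by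
        have : 4 * δ / (r + δ) - 2 * (δ * ε) * (c / (r + δ)) = 2 * δ * (2 - ε * c) / (r + δ) := by
          ring
        rw [this]
        have : 0 < 2 - ε * c := by linarith
        positivity
      linarith
    have key : D' ^ 2 - (2 * (c / (r + δ)) * q) ^ 2 = 16 * δ ^ 2 * (1 - ε * c) / (r + δ) ^ 2 := by
      have : (2 * (c / (r + δ)) * q) ^ 2 = 4 * (c / (r + δ)) ^ 2 * q ^ 2 := by ring
      rw [this, hq2, hD'def]
      field_simp
      ring
    have hkeypos : 0 < 16 * δ ^ 2 * (1 - ε * c) / (r + δ) ^ 2 := by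
      have : 0 < 1 - ε * c := by linarith
      positivity
    have hmain : 2 * (c / (r + δ)) * q < D' := by
      have hsq : (2 * (c / (r + δ)) * q) ^ 2 < D' ^ 2 := by linarith
      exact lt_of_pow_lt_pow_left₀ 2 hD'pos.le hsq
    have hstep : c / (r + δ) < 1 / (2 * q) * D' := by
      rw [div_mul_eq_mul_div, one_mul, lt_div_iff₀ (by linarith : (0:ℝ) < 2 * q)]
      calc c / (r + δ) * (2 * q) = 2 * (c / (r + δ)) * q := by ring
        _ < D' := hmain
    have : 0 < 1 / (2 * q) * D' - 0 - c / (r + δ) := by linarith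
    positivity
end

section
/- Let r, δ, c, ε > 0 with εc < 1, and for λ > 0 let K*(λ) denote the unique positive root of δK² + K(δε + cλ/(r+δ)) + (λ/(r+δ))(cε − 1) = 0, and let U*(λ) = δK*(λ)/λ. Then λ ↦ U*(λ) is strictly decreasing and U*(λ) → 0 as λ → ∞. -/
open Filter

/-- The stationary value of a unit of hashrate U*(λ) = δK*(λ)/λ is strictly
decreasing in λ and tends to 0 as λ → ∞. -/
theorem stmt_11 (r δ c ε : ℝ) (hr : 0 < r) (hδ : 0 < δ) (hc : 0 < c) (hε : 0 < ε)
    (hεc : ε * c < 1)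
    (Kstar : ℝ → ℝ)
    (hKstar : ∀ lam > (0:ℝ), 0 < Kstar lam ∧
      δ * Kstar lam ^ 2 + Kstar lam * (δ * ε + c * lam / (r + δ))
        + (lam / (r + δ)) * (c * ε - 1) = 0)
    (huniq : ∀ lam > (0:ℝ), ∀ K > (0:ℝ),
      δ * K ^ 2 + K * (δ * ε + c * lam / (r + δ)) + (lam / (r + δ)) * (c * ε - 1) = 0
        → K = Kstar lam) :
    StrictAntiOn (fun lam => δ * Kstar lam / lam) (Set.Ioi 0) ∧
      Tendsto (fun lam => δ * Kstar lam / lam) atTop (nhds 0) := by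
  have hrδ : (0:ℝ) < r + δ := by linarith
  set U : ℝ → ℝ := fun lam => δ * Kstar lam / lam with hU
  have hUpos : ∀ lam > (0:ℝ), 0 < U lam := by
    intro lam hlam
    exact div_pos (mul_pos hδ (hKstar lam hlam).1) hlam
  have key : ∀ lam > (0:ℝ),
      lam * ((U lam) ^ 2 * (r + δ) + c * U lam)
        = δ * (1 - c * ε) - δ * ε * (r + δ) * U lam := by
    intro lam hlam
    have h := (hKstar lam hlam).2
    have hl : lam ≠ 0 := ne_of_gt hlam
    have hrd : (r + δ) ≠ 0 := ne_of_gt hrδ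
    simp only [hU]
    field_simp at h ⊢
    linear_combination h
  constructor
  · intro a ha b hb hab
    simp only [Set.mem_Ioi] at ha hb
    have ka := key a ha
    have kb := key b hb
    have hua := hUpos a ha
    have hub := hUpos b hb
    by_contra hcon
    push_neg at hcon
    -- hcon : U a ≤ U b
    have h1 : (b - a) * ((U b) ^ 2 * (r + δ) + c * U b) > 0 := by
      apply mul_pos (by linarith)
      positivity
    nlinarith [mul_nonneg (le_of_lt ha) (mul_nonneg (sub_nonneg.2 hcon) (le_of_lt hrδ)),
      mul_nonneg (mul_nonneg (le_of_lt ha) (sub_nonneg.2 hcon)) (le_of_lt hc),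
      mul_nonneg (mul_nonneg (le_of_lt ha) (sub_nonneg.2 hcon)) (le_of_lt hrδ),
      mul_nonneg (mul_nonneg (mul_nonneg (le_of_lt ha) (sub_nonneg.2 hcon)) (le_of_lt hrδ)) (le_of_lt (add_pos hua hub)),
      mul_nonneg (mul_nonneg (mul_nonneg (le_of_lt hδ) (le_of_lt hε)) (le_of_lt hrδ)) (sub_nonneg.2 hcon)]
  · apply squeeze_zero' (g := fun lam => δ * (1 - c * ε) / c / lam)
    · filter_upwards [eventually_gt_atTop (0:ℝ)] with lam hlam
      exact le_of_lt (hUpos lam hlam)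
    · filter_upwards [eventually_gt_atTop (0:ℝ)] with lam hlam
      have k := key lam hlam
      have hu := hUpos lam hlam
      rw [div_div, le_div_iff₀ (by positivity)]
      nlinarith [mul_pos hlam (mul_pos (pow_pos hu 2) hrδ),
        mul_nonneg (mul_nonneg (le_of_lt hδ) (le_of_lt hε)) (mul_nonneg (le_of_lt hrδ) (le_of_lt hu))]
    · exact Tendsto.div_atTop tendsto_const_nhds tendsto_id
end

section
/- Let r, δ, λ, c, ε > 0. Suppose U is a bounded C¹ solution of the penalized master equation 0 = −(r+δ)U + (−δK + λ(U)₊)U'(K) + 1/(K+ε) − c, where (·)₊ denotes the positive part, and suppose U is decreasing with U(0) > 0. Then the ODE K' = −δK + λ(U(K))₊ has a unique nonnegative stationary point, which coincides with the unique positive root K* of δK² + K(δε + cλ/(r+δ)) + (λ/(r+δ))(cε − 1) = 0 (assuming εc < 1). -/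
/-- For the penalized model (machines cannot be sold), the drift λ(U)₊ has a unique
nonnegative stationary point, which equals the positive root K* of the original
quadratic. -/
theorem stmt_15 (r δ lam c ε : ℝ) (hr : 0 < r) (hδ : 0 < δ) (hlam : 0 < lam)
    (hc : 0 < c) (hε : 0 < ε) (hεc : ε * c < 1)
    (U : ℝ → ℝ) (hC1 : ContDiff ℝ 1 U)
    (hbd : ∃ M, ∀ K ≥ (0:ℝ), |U K| ≤ M)
    (hdec : AntitoneOn U (Set.Ici 0)) (hU0 : 0 < U 0)
    (hUeq : ∀ K ≥ (0:ℝ),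
      0 = -(r + δ) * U K + (-δ * K + lam * max (U K) 0) * deriv U K + 1 / (K + ε) - c) :
    ∀ Kstar : ℝ,
      (0 < Kstar ∧
        δ * Kstar ^ 2 + Kstar * (δ * ε + c * lam / (r + δ))
          + (lam / (r + δ)) * (c * ε - 1) = 0) →
      ∀ K : ℝ, (0 ≤ K ∧ δ * K = lam * max (U K) 0) ↔ K = Kstar := by
  rintro Kstar ⟨hKs, hquad⟩
  have hrδ : (0:ℝ) < r + δ := by linarith
  -- Lemma A: any nonnegative stationary point is positive and satisfies the quadratic
  have hA : ∀ K : ℝ, 0 ≤ K → δ * K = lam * max (U K) 0 →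
      0 < K ∧ δ * K ^ 2 + K * (δ * ε + c * lam / (r + δ))
        + (lam / (r + δ)) * (c * ε - 1) = 0 := by
    intro K hK heq
    have hKε : 0 < K + ε := by linarith
    have hUpos : 0 < U K := by
      by_contra h
      push_neg at h
      have hmax : max (U K) 0 = 0 := max_eq_right h
      rw [hmax, mul_zero] at heq
      have hK0 : K = 0 := by
        rcases mul_eq_zero.mp heq with h' | h'
        · exact absurd h' hδ.ne'
        · exact h'
      rw [hK0] at h
      linarith
    have hmax : max (U K) 0 = U K := max_eq_left hUpos.le
    have h1 := hUeq K hK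
    rw [hmax] at heq h1
    have hdrift : -δ * K + lam * U K = 0 := by linarith
    rw [hdrift, zero_mul] at h1
    have hKpos : 0 < K := by
      rcases lt_or_eq_of_le hK with h | h
      · exact h
      · exfalso
        have h2 := mul_pos hlam hUpos
        rw [← h] at heq h2
        rw [mul_zero] at heq
        linarith
    refine ⟨hKpos, ?_⟩
    -- from h1 : 0 = -(r+δ)*U K + 0 + 1/(K+ε) - c
    have hUval : U K * (r + δ) * (K + ε) = 1 - c * (K + ε) := by
      have h2 : (r + δ) * U K = 1 / (K + ε) - c := by linarith
      field_simp at h2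
      linarith
    have heq2 : δ * K * (r + δ) * (K + ε) = lam * (1 - c * (K + ε)) := by
      calc δ * K * (r + δ) * (K + ε) = lam * (U K * (r + δ) * (K + ε)) := by
            rw [heq]; ring
        _ = lam * (1 - c * (K + ε)) := by rw [hUval]
    have hne : (r + δ) ≠ 0 := hrδ.ne'
    field_simp
    linear_combination heq2
  -- Uniqueness of positive roots of the quadratic
  have huniq : ∀ x y : ℝ, 0 < x → 0 < y →
      δ * x ^ 2 + x * (δ * ε + c * lam / (r + δ)) + (lam / (r + δ)) * (c * ε - 1) = 0 →
      δ * y ^ 2 + y * (δ * ε + c * lam / (r + δ)) + (lam / (r + δ)) * (c * ε - 1) = 0 →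
      x = y := by
    intro x y hx hy h1 h2
    have hb : 0 < δ * ε + c * lam / (r + δ) := by positivity
    have hfac : (x - y) * (δ * (x + y) + (δ * ε + c * lam / (r + δ))) = 0 := by
      linear_combination h1 - h2
    rcases mul_eq_zero.mp hfac with h | h
    · linarith
    · nlinarith
  -- Existence: g(K) = -δK + λ max(U K, 0) has a zero on [0, ∞)
  obtain ⟨M, hM⟩ := hbd
  set g : ℝ → ℝ := fun K => -δ * K + lam * max (U K) 0 with hg
  have hgcont : Continuous g := by
    have : Continuous U := hC1.continuous
    fun_prop
  set B : ℝ := (lam * |M| + 1) / δ with hB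
  have hBpos : 0 < B := by positivity
  have hgB : g B < 0 := by
    have h1 : max (U B) 0 ≤ |M| := by
      have := hM B hBpos.le
      have h2 : U B ≤ |M| := le_trans (le_abs_self _) (this.trans (le_abs_self _))
      exact max_le h2 (abs_nonneg _)
    have h3 : lam * max (U B) 0 ≤ lam * |M| := by
      exact mul_le_mul_of_nonneg_left h1 hlam.le
    have h4 : δ * B = lam * |M| + 1 := by
      rw [hB]
      field_simp
    simp only [hg]
    nlinarith
  have hg0 : 0 < g 0 := by
    simp only [hg]
    rw [max_eq_left hU0.le]
    simp
    positivity
  obtain ⟨K₀, hK₀mem, hK₀⟩ : ∃ K₀ ∈ Set.Icc (0:ℝ) B, g K₀ = 0 := by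
    have h := intermediate_value_Icc' hBpos.le hgcont.continuousOn
    have h0 : (0:ℝ) ∈ Set.Icc (g B) (g 0) := ⟨hgB.le, hg0.le⟩
    obtain ⟨K₀, hmem, heq⟩ := h h0
    exact ⟨K₀, hmem, heq⟩
  have hK₀stat : δ * K₀ = lam * max (U K₀) 0 := by
    simp only [hg] at hK₀
    linarith
  obtain ⟨hK₀pos, hK₀quad⟩ := hA K₀ hK₀mem.1 hK₀stat
  have hK₀eq : K₀ = Kstar := huniq K₀ Kstar hK₀pos hKs hK₀quad hquad
  intro K
  constructor
  · rintro ⟨hK, heq⟩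
    obtain ⟨hKpos, hKquad⟩ := hA K hK heq
    exact huniq K Kstar hKpos hKs hKquad hquad
  · rintro rfl
    rw [← hK₀eq]
    exact ⟨hK₀mem.1, hK₀stat⟩
end
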